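/- arXiv:2110.15104 — 4 statements merged into one kernel-verified Lean document; each statement's English description precedes it below -/
import Mathlib

section
/- Let $n\ge 2$, $k\ge 0$ with $2k+n-2>0$, and let $p$ be a nonzero $k$-homogeneous harmonic polynomial on $\mathbb{R}^n$. Then for each coordinate index $\alpha$, the polynomial $S_\alpha(p) := x_\alpha p - \frac{|x|^2 \partial_\alpha p}{2k+n-2}$ is nonzero. -/
open MvPolynomial

/-- A polynomial is harmonic if its formal Laplacian vanishes. -/
def IsHarmonic {n : ℕ} (p : MvPolynomial (Fin n) ℝ) : Prop :=
  ∑ i : Fin n, pderiv i (pderiv i p) = 0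

lemma coeff_pderiv' {σ : Type*} [DecidableEq σ] (i : σ) (p : MvPolynomial σ ℝ) (m : σ →₀ ℕ) :
    coeff m (pderiv i p) = (m i + 1 : ℕ) * coeff (m + Finsupp.single i 1) p := by
  induction p using MvPolynomial.induction_on' with
  | monomial s a =>
    rw [pderiv_monomial, coeff_monomial, coeff_monomial]
    by_cases h : s = m + Finsupp.single i 1
    · subst h
      rw [if_pos rfl, if_pos (by simp)]
      simp [mul_comm]
    · rw [if_neg h]
      by_cases h2 : s - Finsupp.single i 1 = m
      · rcases Nat.eq_zero_or_pos (s i) with h3 | h3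
        · simp [h3]
        · exfalso
          apply h
          ext j
          by_cases hj : j = i
          · subst hj; simp [← h2, Nat.sub_add_cancel h3]
          · simp [← h2, hj, Finsupp.single_eq_of_ne' (Ne.symm hj)]
      · simp [if_neg h2]
  | add f g hf hg => simp [map_add, coeff_add, hf, hg]; ring

lemma coeff_zero_of_degreeOf_lt' {n : ℕ} (p : MvPolynomial (Fin n) ℝ) (α : Fin n)
    (s : Fin n →₀ ℕ) (h : degreeOf α p < s α) : coeff s p = 0 := by
  by_contra hc
  exact absurd (monomial_le_degreeOf α (MvPolynomial.mem_support_iff.mpr hc)) (not_le.mpr h)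

/-- if `p` is a nonzero `k`-homogeneous harmonic polynomial on ℝⁿ
(n ≥ 2, 2k+n-2 > 0), then `S_α(p) := x_α p - |x|² ∂_α p / (2k+n-2)` is nonzero. -/
theorem proj_ne_zero {n : ℕ} (hn : 2 ≤ n) (k : ℕ) (hkn : 0 < 2 * k + n - 2)
    (p : MvPolynomial (Fin n) ℝ) (hp : p ≠ 0)
    (hhom : p.IsHomogeneous k) (hharm : IsHarmonic p) (α : Fin n) :
    X α * p - C ((2 * (k : ℝ) + n - 2)⁻¹) *
        (∑ i : Fin n, (X i : MvPolynomial (Fin n) ℝ) ^ 2) * pderiv α p ≠ 0 := by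
  intro heq
  rw [sub_eq_zero] at heq
  set c : ℝ := (2 * (k : ℝ) + n - 2)⁻¹ with hc
  set d := degreeOf α p with hd
  obtain ⟨m, hm, hmd⟩ : ∃ m ∈ p.support, m α = d := by
    have hne : p.support.Nonempty := Finset.nonempty_iff_ne_empty.mpr (by rwa [Ne, MvPolynomial.support_eq_empty])
    obtain ⟨m, hm, h2⟩ := Finset.exists_mem_eq_sup p.support hne (fun m => m α)
    exact ⟨m, hm, by rw [hd, degreeOf_eq_sup, h2]⟩
  have hcm : coeff m p ≠ 0 := MvPolynomial.mem_support_iff.mp hm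
  have hdk : d ≤ k := le_trans (degreeOf_le_totalDegree p α) (hhom.totalDegree hp).le
  have hL : coeff (Finsupp.single α 1 + m) (X α * p) = coeff m p := coeff_X_mul m α p
  have key := congrArg (coeff (Finsupp.single α 1 + m)) heq
  rw [hL, mul_assoc, coeff_C_mul, Finset.sum_mul, coeff_sum] at key
  have hterm : ∀ i : Fin n,
      coeff (Finsupp.single α 1 + m) (X i ^ 2 * pderiv α p)
        = if i = α then (d : ℝ) * coeff m p else 0 := by
    intro i
    rw [X_pow_eq_monomial, coeff_monomial_mul']
    by_cases hiα : i = α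
    · subst hiα
      rcases Nat.eq_zero_or_pos d with h0 | h1
      · rw [if_neg, if_pos rfl, h0, Nat.cast_zero, zero_mul]
        intro hle
        have := Finsupp.le_def.mp hle i
        simp [Finsupp.single_apply, Finsupp.add_apply, hmd, h0] at this
      · have h1' : Finsupp.single i 1 ≤ m := Finsupp.le_def.mpr (fun j => by
          rcases eq_or_ne j i with rfl | hj
          · simp [hmd]; omega
          · simp [Finsupp.single_apply, (Ne.symm hj)])
        rw [if_pos (Finsupp.le_def.mpr (fun j => by
          rcases eq_or_ne j i with rfl | hj
          · simp [Finsupp.single_apply, hmd]; omega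
          · simp [Finsupp.single_apply, Ne.symm hj])), one_mul, coeff_pderiv']
        have hrw : Finsupp.single i 1 + m - Finsupp.single i 2 = m - Finsupp.single i 1 := by
          ext j
          rcases eq_or_ne j i with rfl | hj
          · simp [Finsupp.single_apply]; omega
          · simp [Finsupp.single_apply, Ne.symm hj]
        rw [hrw, tsub_add_cancel_of_le h1']
        simp [Finsupp.tsub_apply, Finsupp.single_apply, hmd, Nat.sub_add_cancel h1]
    · rw [if_neg hiα]
      split_ifs with hle
      · rw [one_mul, coeff_pderiv',
          coeff_zero_of_degreeOf_lt' p α _ ?_, mul_zero]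
        have h2 : (Finsupp.single i 2 : Fin n →₀ ℕ) α = 0 :=
          Finsupp.single_eq_of_ne' hiα
        rw [Finsupp.add_apply, Finsupp.tsub_apply, Finsupp.add_apply, Finsupp.single_apply,
          if_pos rfl, h2, hmd]
        omega
      · rfl
  rw [Finset.sum_congr rfl (fun i _ => hterm i), Finset.sum_ite_eq' Finset.univ α
    (fun _ => (d : ℝ) * coeff m p), if_pos (Finset.mem_univ α)] at key
  -- key : coeff m p = c * (d * coeff m p)
  have hpos : (0 : ℝ) < 2 * (k : ℝ) + n - 2 := by
    have : 2 < 2 * k + n := by omega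
    have := (Nat.cast_lt (α := ℝ)).mpr this
    push_cast at this ⊢
    linarith
  have hcd : c * d = 1 := by
    have h1 : (c * d - 1) * coeff m p = 0 := by linarith [key]
    rcases mul_eq_zero.mp h1 with h | h
    · linarith
    · exact absurd h hcm
  have hd0 : d ≠ 0 := by
    intro h; rw [h] at hcd; simp at hcd
  have hdval : (d : ℝ) = 2 * (k : ℝ) + n - 2 := by
    rw [hc] at hcd
    field_simp at hcd
    linarith
  have hdn : (d : ℝ) + 2 = 2 * k + n := by linarith
  have : d + 2 = 2 * k + n := by exact_mod_cast hdn
  omega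
end

section
/- A nonzero harmonic polynomial on $\mathbb{R}^n$ ($n\ge 2$) is not divisible by $|x|^2 = x_1^2 + \cdots + x_n^2$. -/
open MvPolynomial

namespace FischerAux

variable {n : ℕ}

/-- weight `d! = ∏ i, (d i)!` as a real number. -/
noncomputable def w (d : Fin n →₀ ℕ) : ℝ := ∏ i, (Nat.factorial (d i) : ℝ)

lemma w_pos (d : Fin n →₀ ℕ) : 0 < w d :=
  Finset.prod_pos fun i _ => by positivity

lemma w_add_single (m : Fin n →₀ ℕ) (i : Fin n) :
    w (m + Finsupp.single i 1) = ((m i : ℝ) + 1) * w m := by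
  unfold w
  rw [← Finset.prod_erase_mul _ _ (Finset.mem_univ i),
      ← Finset.prod_erase_mul _ _ (Finset.mem_univ i)]
  have h1 : ∀ j ∈ Finset.univ.erase i,
      ((Nat.factorial ((m + Finsupp.single i 1 : Fin n →₀ ℕ) j) : ℝ)) = (Nat.factorial (m j) : ℝ) := by
    intro j hj
    have hji : j ≠ i := (Finset.mem_erase.1 hj).1
    rw [Finsupp.add_apply, Finsupp.single_eq_of_ne' (Ne.symm hji), add_zero]
  rw [Finset.prod_congr rfl h1]
  have h2 : (m + Finsupp.single i 1 : Fin n →₀ ℕ) i = m i + 1 := by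
    rw [Finsupp.add_apply, Finsupp.single_eq_same]
  rw [h2, Nat.factorial_succ]
  push_cast
  ring

/-- The Fischer pairing. -/
noncomputable def P (f g : MvPolynomial (Fin n) ℝ) : ℝ :=
  ∑ d ∈ f.support, w d * coeff d f * coeff d g

lemma P_eq_sum_of_subset {f : MvPolynomial (Fin n) ℝ} {s : Finset (Fin n →₀ ℕ)}
    (hs : f.support ⊆ s) (g : MvPolynomial (Fin n) ℝ) :
    P f g = ∑ d ∈ s, w d * coeff d f * coeff d g := by
  refine Finset.sum_subset hs fun d _ hd => ?_
  rw [MvPolynomial.notMem_support_iff.1 hd]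
  ring

lemma P_add_left (f₁ f₂ g : MvPolynomial (Fin n) ℝ) :
    P (f₁ + f₂) g = P f₁ g + P f₂ g := by
  have h1 : (f₁ + f₂).support ⊆ f₁.support ∪ f₂.support := MvPolynomial.support_add
  rw [P_eq_sum_of_subset h1 g, P_eq_sum_of_subset (Finset.subset_union_left) g,
      P_eq_sum_of_subset (Finset.subset_union_right) g, ← Finset.sum_add_distrib]
  refine Finset.sum_congr rfl fun d _ => ?_
  rw [coeff_add]
  ring

lemma P_zero_left (g : MvPolynomial (Fin n) ℝ) : P 0 g = 0 := by
  simp [P]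

lemma P_sum_left {ι : Type*} (s : Finset ι) (f : ι → MvPolynomial (Fin n) ℝ)
    (g : MvPolynomial (Fin n) ℝ) :
    P (∑ i ∈ s, f i) g = ∑ i ∈ s, P (f i) g := by
  classical
  induction s using Finset.induction with
  | empty => simp [P_zero_left]
  | @insert _ _ h ih =>
    rw [Finset.sum_insert h, Finset.sum_insert h, P_add_left, ih]

lemma P_sum_right {ι : Type*} (f : MvPolynomial (Fin n) ℝ) (s : Finset ι)
    (g : ι → MvPolynomial (Fin n) ℝ) :
    P f (∑ i ∈ s, g i) = ∑ i ∈ s, P f (g i) := by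
  unfold P
  rw [Finset.sum_comm]
  refine Finset.sum_congr rfl fun d _ => ?_
  rw [MvPolynomial.coeff_sum, Finset.mul_sum]

lemma P_monomial_left (m : Fin n →₀ ℕ) (c : ℝ) (g : MvPolynomial (Fin n) ℝ) :
    P (monomial m c) g = w m * c * coeff m g := by
  by_cases hc : c = 0
  · simp [hc, P_zero_left]
  · unfold P
    rw [MvPolynomial.support_monomial, if_neg hc, Finset.sum_singleton, coeff_monomial,
      if_pos rfl]

lemma coeff_pderiv (i : Fin n) (m : Fin n →₀ ℕ) (g : MvPolynomial (Fin n) ℝ) :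
    coeff m (pderiv i g) = ((m i : ℝ) + 1) * coeff (m + Finsupp.single i 1) g := by
  induction g using MvPolynomial.induction_on' with
  | add p q hp hq =>
    rw [map_add, coeff_add, coeff_add, hp, hq]
    ring
  | monomial s a =>
    rw [pderiv_monomial, coeff_monomial, coeff_monomial]
    by_cases hs : s = m + Finsupp.single i 1
    · have hsub : s - Finsupp.single i 1 = m := by
        ext j; rw [hs]; simp [Finsupp.tsub_apply, Finsupp.add_apply]
      have hsi : s i = m i + 1 := by
        rw [hs, Finsupp.add_apply, Finsupp.single_eq_same]
      rw [if_pos hsub, if_pos hs, hsi]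
      push_cast
      ring
    · rw [if_neg hs, mul_zero]
      by_cases hm : s - Finsupp.single i 1 = m
      · rw [if_pos hm]
        have hsi : s i = 0 := by
          by_contra h
          have hle : Finsupp.single i 1 ≤ s :=
            Finsupp.single_le_iff.2 (Nat.one_le_iff_ne_zero.2 h)
          have : m + Finsupp.single i 1 = s := by
            rw [← hm, tsub_add_cancel_of_le hle]
          exact hs this.symm
        rw [hsi]
        simp
      · rw [if_neg hm]

lemma P_X_mul_left (i : Fin n) (f g : MvPolynomial (Fin n) ℝ) :
    P (X i * f) g = P f (pderiv i g) := by
  induction f using MvPolynomial.induction_on' with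
  | add p q hp hq => rw [mul_add, P_add_left, P_add_left, hp, hq]
  | monomial s a =>
    have hX : (X i : MvPolynomial (Fin n) ℝ) * monomial s a
        = monomial (s + Finsupp.single i 1) a := by
      have : (X i : MvPolynomial (Fin n) ℝ) = monomial (Finsupp.single i 1) 1 := rfl
      rw [this, monomial_mul, one_mul, add_comm]
    rw [hX, P_monomial_left, P_monomial_left, coeff_pderiv i s g, w_add_single]
    ring

lemma P_self_pos {p : MvPolynomial (Fin n) ℝ} (hp : p ≠ 0) : 0 < P p p := by
  apply Finset.sum_pos
  · intro d hd
    have hc : coeff d p ≠ 0 := MvPolynomial.mem_support_iff.1 hd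
    rw [mul_assoc]
    exact mul_pos (w_pos d) (mul_self_pos.2 hc)
  · exact MvPolynomial.support_nonempty.2 hp

end FischerAux

open FischerAux

/-- A nonzero harmonic polynomial on ℝⁿ (n ≥ 2) is not divisible by
`|x|² = x₁² + ⋯ + xₙ²`. -/
theorem nonzero_harmonic_not_div_normSq {n : ℕ} (hn : 2 ≤ n)
    (p : MvPolynomial (Fin n) ℝ) (hp : p ≠ 0) (hharm : IsHarmonic p) :
    ¬ (∑ i : Fin n, (X i : MvPolynomial (Fin n) ℝ) ^ 2) ∣ p := by
  rintro ⟨q, hq⟩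
  have hh : ∑ i : Fin n, pderiv i (pderiv i p) = 0 := hharm
  have h0 : P p p = 0 := by
    calc P p p
        = P ((∑ i : Fin n, (X i : MvPolynomial (Fin n) ℝ) ^ 2) * q) p := by rw [← hq]
      _ = P (∑ i : Fin n, (X i : MvPolynomial (Fin n) ℝ) ^ 2 * q) p := by
          rw [Finset.sum_mul]
      _ = ∑ i : Fin n, P ((X i : MvPolynomial (Fin n) ℝ) ^ 2 * q) p :=
          P_sum_left _ _ _
      _ = ∑ i : Fin n, P q (pderiv i (pderiv i p)) := by
          refine Finset.sum_congr rfl fun i _ => ?_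
          rw [pow_two, mul_assoc, P_X_mul_left, P_X_mul_left]
      _ = P q (∑ i : Fin n, pderiv i (pderiv i p)) := (P_sum_right _ _ _).symm
      _ = P q 0 := by rw [hh]
      _ = 0 := by simp [P]
  exact absurd h0 (ne_of_gt (P_self_pos hp))
end

section
/- Fix $n\ge 2$. There exists a constant $C(n)$ such that for all $(k,h)\in\mathbb{Z}^2$ with $k\ge 0$, $k+h>-n$, and $h\ne -2$, one has $\frac{(1+|h|)(1+\max\{k,|h|\})}{|(h+2)(2k+h+n)|} \le C(n)$. -/
/-- for each `n ≥ 2` there is `C(n)` bounding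
`⟨h⟩⟨max{k,|h|}⟩ / |(h+2)(2k+h+n)|` on `{k ≥ 0, k+h > -n, h ≠ -2}`. -/
theorem inverse_laplacian_bound (n : ℕ) (hn : 2 ≤ n) :
    ∃ C : ℝ, 0 < C ∧ ∀ k h : ℤ, 0 ≤ k → -(n : ℤ) < k + h → h ≠ -2 →
      (1 + |(h : ℝ)|) * (1 + (max k |h| : ℤ)) / |((h : ℝ) + 2) * (2 * k + h + n)| ≤ C := by
  refine ⟨4 * n, by positivity, ?_⟩
  intro k h hk hkh hne
  have hB : (0 : ℤ) < 2 * k + h + n := by omega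
  have hA : h + 2 ≠ 0 := by omega
  have c1 : 1 + |h| ≤ 4 * |h + 2| := by
    rcases abs_cases h with ⟨e1, _⟩ | ⟨e1, _⟩ <;>
      rcases abs_cases (h + 2) with ⟨e2, _⟩ | ⟨e2, _⟩ <;> omega
  have c2 : 1 + max k |h| ≤ (n : ℤ) * (2 * k + h + n) := by
    have hn' : (2 : ℤ) ≤ n := by exact_mod_cast hn
    rcases le_or_gt 0 h with hh | hh
    · have h1 : 1 + max k |h| ≤ 2 * k + h + n := by
        rw [abs_of_nonneg hh]; omega
      nlinarith [mul_le_mul_of_nonneg_right hn' (le_of_lt hB)]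
    · have h1 : 1 + max k |h| ≤ k + n := by
        rw [abs_of_neg hh]; omega
      have h2 : (n : ℤ) * (k + 1) ≤ (n : ℤ) * (2 * k + h + n) :=
        mul_le_mul_of_nonneg_left (by omega) (by omega)
      nlinarith
  have key : (1 + |h|) * (1 + max k |h|) ≤ 4 * (n : ℤ) * (|h + 2| * (2 * k + h + n)) := by
    calc (1 + |h|) * (1 + max k |h|) ≤ (4 * |h + 2|) * ((n : ℤ) * (2 * k + h + n)) :=
          mul_le_mul c1 c2 (by positivity) (by positivity)
      _ = 4 * (n : ℤ) * (|h + 2| * (2 * k + h + n)) := by ring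
  have hd : (0 : ℝ) < |((h : ℝ) + 2) * (2 * k + h + n)| := by
    apply abs_pos.mpr
    apply mul_ne_zero
    · exact_mod_cast (by exact_mod_cast hA : ((h : ℝ) + 2) ≠ 0)
    · have hBr : (0 : ℝ) < 2 * (k : ℝ) + h + n := by exact_mod_cast hB
      exact hBr.ne'
  rw [div_le_iff₀ hd]
  have habs : |((h : ℝ) + 2) * (2 * k + h + n)| = ((|h + 2| * (2 * k + h + n) : ℤ) : ℝ) := by
    push_cast
    rw [abs_mul, abs_of_pos (by exact_mod_cast hB : (0:ℝ) < (2 * (k:ℝ) + h + n))]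
  rw [habs]
  exact_mod_cast key
end

section
/- For $\ell\ge 1$ define $\Sigma_\ell := \{(x,y)\in\mathbb{Z}^2 : x+y\ge \ell,\ y\ge -2\ell,\ 4x+3y\ge 0,\ 2x+3y\ge 0,\ y \text{ even}\}$. Then $\Sigma_\ell + \Sigma_m \subseteq \Sigma_{\ell+m}$ for all $\ell, m\ge 1$, and in fact $\Sigma_\ell = \Sigma_1 + \cdots + \Sigma_1$ ($\ell$ times). -/
open Pointwise

/-- The cone `Σ_ℓ ⊆ ℤ²` from the paper. -/
def SigmaSet (ℓ : ℕ) : Set (ℤ × ℤ) :=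
  {p | (ℓ : ℤ) ≤ p.1 + p.2 ∧ -(2 * (ℓ : ℤ)) ≤ p.2 ∧ 0 ≤ 4 * p.1 + 3 * p.2 ∧
    0 ≤ 2 * p.1 + 3 * p.2 ∧ Even p.2}

lemma mem_sigma {ℓ : ℕ} {x y : ℤ} (h1 : (ℓ : ℤ) ≤ x + y) (h2 : -(2 * (ℓ : ℤ)) ≤ y)
    (h3 : 0 ≤ 4 * x + 3 * y) (h4 : 0 ≤ 2 * x + 3 * y) (r : ℤ) (hr : y = r + r) :
    ((x, y) : ℤ × ℤ) ∈ SigmaSet ℓ :=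
  ⟨h1, h2, h3, h4, r, hr⟩

lemma sigma_add {ℓ m : ℕ} {a b : ℤ × ℤ} (ha : a ∈ SigmaSet ℓ) (hb : b ∈ SigmaSet m) :
    a + b ∈ SigmaSet (ℓ + m) := by
  obtain ⟨h1, h2, h3, h4, r, hr⟩ := ha
  obtain ⟨k1, k2, k3, k4, s, hs⟩ := hb
  refine ⟨?_, ?_, ?_, ?_, r + s, ?_⟩ <;>
    simp only [Prod.fst_add, Prod.snd_add, Nat.cast_add] <;> omega

lemma sigma_decomp : ∀ ℓ : ℕ, 1 ≤ ℓ → ∀ p ∈ SigmaSet ℓ,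
    ∃ a : Fin ℓ → ℤ × ℤ, (∀ i, a i ∈ SigmaSet 1) ∧ ∑ i, a i = p := by
  intro ℓ hℓ
  induction ℓ, hℓ using Nat.le_induction with
  | base =>
    intro p hp
    exact ⟨fun _ => p, fun _ => hp, by simp⟩
  | succ n hn ih =>
    rintro ⟨x, y⟩ ⟨h1, h2, h3, h4, r, hr⟩
    push_cast at h1 h2
    have key : ∃ q : ℤ × ℤ, q ∈ SigmaSet 1 ∧ ((x, y) : ℤ × ℤ) - q ∈ SigmaSet n := by
      by_cases h6 : 6 ≤ 4 * x + 3 * y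
      · refine ⟨(3, -2), mem_sigma (by norm_num) (by norm_num) (by norm_num) (by norm_num)
          (-1) (by norm_num), ?_⟩
        have : ((x, y) : ℤ × ℤ) - (3, -2) = (x - 3, y + 2) := by
          simp [Prod.ext_iff]
        rw [this]
        exact mem_sigma (by push_cast; omega) (by push_cast; omega) (by omega) (by omega)
          (r + 1) (by omega)
      · by_cases h2' : 2 ≤ 4 * x + 3 * y
        · refine ⟨(-1, 2), mem_sigma (by norm_num) (by norm_num) (by norm_num) (by norm_num)
            1 (by norm_num), ?_⟩
          have : ((x, y) : ℤ × ℤ) - (-1, 2) = (x + 1, y - 2) := by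
            simp [Prod.ext_iff]
          rw [this]
          exact mem_sigma (by push_cast; omega) (by push_cast; omega) (by omega) (by omega)
            (r - 1) (by omega)
        · refine ⟨(-3, 4), mem_sigma (by norm_num) (by norm_num) (by norm_num) (by norm_num)
            2 (by norm_num), ?_⟩
          have : ((x, y) : ℤ × ℤ) - (-3, 4) = (x + 3, y - 4) := by
            simp [Prod.ext_iff]
          rw [this]
          exact mem_sigma (by push_cast; omega) (by push_cast; omega) (by omega) (by omega)
            (r - 2) (by omega)
    obtain ⟨q, hq, hpq⟩ := key
    obtain ⟨a, ha, hsum⟩ := ih _ hpq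
    refine ⟨Fin.cons q a, fun i => Fin.cases hq ha i, ?_⟩
    rw [Fin.sum_cons, hsum]
    abel

lemma sigma_sum : ∀ ℓ : ℕ, 1 ≤ ℓ → ∀ a : Fin ℓ → ℤ × ℤ,
    (∀ i, a i ∈ SigmaSet 1) → ∑ i, a i ∈ SigmaSet ℓ := by
  intro ℓ hℓ
  induction ℓ, hℓ using Nat.le_induction with
  | base =>
    intro a ha
    simpa using ha 0
  | succ n hn ih =>
    intro a ha
    rw [Fin.sum_univ_succ]
    have := sigma_add (ha 0) (ih (fun i => a i.succ) (fun i => ha i.succ))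
    rwa [Nat.add_comm] at this

/-- `Σ_ℓ + Σ_m ⊆ Σ_{ℓ+m}` and `Σ_ℓ` is the `ℓ`-fold sum of `Σ₁`. -/
theorem SigmaSet_add (ℓ m : ℕ) (hℓ : 1 ≤ ℓ) (hm : 1 ≤ m) :
    SigmaSet ℓ + SigmaSet m ⊆ SigmaSet (ℓ + m)
    ∧ SigmaSet ℓ =
        {s | ∃ a : Fin ℓ → ℤ × ℤ, (∀ i, a i ∈ SigmaSet 1) ∧ ∑ i, a i = s} := by
  constructor
  · rw [Set.add_subset_iff]
    intro x hx y hy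
    exact sigma_add hx hy
  · ext s
    simp only [Set.mem_setOf_eq]
    constructor
    · exact sigma_decomp ℓ hℓ s
    · rintro ⟨a, ha, rfl⟩
      exact sigma_sum ℓ hℓ a ha
end
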